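/- A permutation σ satisfies: s(σ) avoids both 132 and 231 if and only if σ avoids the classical patterns 2341 and 1342 and the vincular patterns 3̲2̲41 and 3̲1̲42. That is, s^{-1}(Av(132,231)) = Av(2341, 1342, 3̲2̲41, 3̲1̲42). -/

import Mathlib

/-- West's stack-sorting map, implemented with fuel (fuel = length suffices). -/
def ssAux : ℕ → List ℕ → List ℕ
  | 0, _ => []
  | _ + 1, [] => []
  | fuel + 1, l =>
    let m := l.foldr max 0
    let i := l.idxOf m
    ssAux fuel (l.take i) ++ ssAux fuel (l.drop (i + 1)) ++ [m]

/-- West's stack-sorting map `s`. -/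
def stackSort (l : List ℕ) : List ℕ := ssAux l.length l

/-- `σ` contains the classical pattern `τ`. -/
def Contains (τ σ : List ℕ) : Prop :=
  ∃ f : Fin τ.length → Fin σ.length, StrictMono f ∧
    ∀ i j : Fin τ.length, τ.get i < τ.get j ↔ σ.get (f i) < σ.get (f j)

/-- `σ` avoids the classical pattern `τ`. -/
def Avoids (σ τ : List ℕ) : Prop := ¬ Contains τ σ

/-- `σ` contains the vincular pattern 3̲2̲41: indices `i₁ < i₂ < i₃ < i₄` with `i₂ = i₁ + 1`
and `σ(i₄) < σ(i₂) < σ(i₁) < σ(i₃)`. -/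
def Contains3241v (σ : List ℕ) : Prop :=
  ∃ i1 i2 i3 i4 : Fin σ.length, i1 < i2 ∧ i2 < i3 ∧ i3 < i4 ∧ (i2 : ℕ) = (i1 : ℕ) + 1 ∧
    σ.get i4 < σ.get i2 ∧ σ.get i2 < σ.get i1 ∧ σ.get i1 < σ.get i3

/-- `σ` contains the vincular pattern 3̲1̲42: indices `i₁ < i₂ < i₃ < i₄` with `i₂ = i₁ + 1`
and `σ(i₂) < σ(i₄) < σ(i₁) < σ(i₃)`. -/
def Contains3142v (σ : List ℕ) : Prop :=
  ∃ i1 i2 i3 i4 : Fin σ.length, i1 < i2 ∧ i2 < i3 ∧ i3 < i4 ∧ (i2 : ℕ) = (i1 : ℕ) + 1 ∧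
    σ.get i2 < σ.get i4 ∧ σ.get i4 < σ.get i1 ∧ σ.get i1 < σ.get i3

lemma ssAux_cons (fuel : ℕ) (x : ℕ) (xs : List ℕ) :
    ssAux (fuel+1) (x::xs) =
      ssAux fuel ((x::xs).take ((x::xs).idxOf ((x::xs).foldr max 0))) ++
      ssAux fuel ((x::xs).drop ((x::xs).idxOf ((x::xs).foldr max 0) + 1)) ++
      [(x::xs).foldr max 0] := by
  rfl

lemma le_foldr_max (l : List ℕ) : ∀ x ∈ l, x ≤ l.foldr max 0 := by
  induction l with
  | nil => simp
  | cons a t ih =>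
    intro x hx
    simp only [List.mem_cons] at hx
    rcases hx with h | h
    · subst h; simp [le_max_iff, le_refl]
    · simp only [List.foldr_cons]
      exact le_max_of_le_right (ih x h)

lemma foldr_max_mem (l : List ℕ) (h : l ≠ []) : l.foldr max 0 ∈ l := by
  induction l with
  | nil => simp at h
  | cons a t ih =>
    by_cases ht : t = []
    · subst ht; simp
    · have := ih ht
      simp only [List.foldr_cons]
      rcases max_cases a (t.foldr max 0) with ⟨h1, _⟩ | ⟨h1, _⟩
      · rw [h1]; exact List.mem_cons_self
      · rw [h1]; exact List.mem_cons_of_mem _ this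

lemma ssAux_fuel : ∀ (f1 : ℕ), ∀ (l : List ℕ) (f2 : ℕ), l.length ≤ f1 → l.length ≤ f2 →
    ssAux f1 l = ssAux f2 l := by
  intro f1
  induction f1 with
  | zero =>
    intro l f2 h1 _
    have : l = [] := List.length_eq_zero_iff.mp (Nat.le_zero.mp h1)
    subst this
    cases f2 <;> rfl
  | succ f ih =>
    intro l f2 h1 h2
    cases l with
    | nil => cases f2 <;> rfl
    | cons x xs =>
      have hne : (x::xs) ≠ [] := by simp
      obtain ⟨g, rfl⟩ : ∃ g, f2 = g + 1 := by
        cases f2 with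
        | zero => simp at h2
        | succ g => exact ⟨g, rfl⟩
      rw [ssAux_cons, ssAux_cons]
      set l := x::xs with hl
      set m := l.foldr max 0 with hm
      set i := l.idxOf m with hi
      have him : i < l.length := List.idxOf_lt_length_iff.mpr (foldr_max_mem l hne)
      have hta : (l.take i).length ≤ f := by
        rw [List.length_take]
        have : i ≤ f := by omega
        omega
      have htb : (l.drop (i+1)).length ≤ f := by
        rw [List.length_drop]; omega
      have hta' : (l.take i).length ≤ g := by
        rw [List.length_take]; omega
      have htb' : (l.drop (i+1)).length ≤ g := by
        rw [List.length_drop]; omega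
      rw [ih _ g hta hta', ih _ g htb htb']

lemma stackSort_nil : stackSort [] = [] := rfl

lemma stackSort_decomp (l : List ℕ) (h : l ≠ []) :
    stackSort l = stackSort (l.take (l.idxOf (l.foldr max 0))) ++
      stackSort (l.drop (l.idxOf (l.foldr max 0) + 1)) ++ [l.foldr max 0] := by
  cases l with
  | nil => simp at h
  | cons x xs =>
    show ssAux (x::xs).length (x::xs) = _
    have hlen : (x::xs).length = xs.length + 1 := rfl
    rw [hlen, ssAux_cons]
    have him : (x::xs).idxOf ((x::xs).foldr max 0) < (x::xs).length :=
      List.idxOf_lt_length_iff.mpr (foldr_max_mem _ h)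
    have hi2 : (x::xs).idxOf ((x::xs).foldr max 0) ≤ xs.length := by
      rw [hlen] at him; omega
    congr 2
    · apply ssAux_fuel
      · rw [List.length_take]; omega
      · exact le_refl _
    · apply ssAux_fuel
      · rw [List.length_drop]; omega
      · exact le_refl _

lemma take_max_drop (l : List ℕ) (h : l ≠ []) :
    l.take (l.idxOf (l.foldr max 0)) ++ (l.foldr max 0) ::
      l.drop (l.idxOf (l.foldr max 0) + 1) = l := by
  set m := l.foldr max 0
  set i := l.idxOf m
  have him : i < l.length := List.idxOf_lt_length_iff.mpr (foldr_max_mem l h)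
  have h2 := List.drop_eq_getElem_cons him
  rw [List.getElem_idxOf him] at h2
  rw [← h2]
  exact List.take_append_drop i l

lemma stackSort_perm_aux : ∀ (n : ℕ) (l : List ℕ), l.length ≤ n → (stackSort l).Perm l := by
  intro n
  induction n with
  | zero =>
    intro l h
    have : l = [] := List.length_eq_zero_iff.mp (Nat.le_zero.mp h)
    subst this; simp [stackSort_nil]
  | succ n ih =>
    intro l h
    rcases eq_or_ne l [] with rfl | hne
    · simp [stackSort_nil]
    rw [stackSort_decomp l hne]
    set m := l.foldr max 0
    set i := l.idxOf m
    have him : i < l.length := List.idxOf_lt_length_iff.mpr (foldr_max_mem l hne)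
    have h1 : (stackSort (l.take i)).Perm (l.take i) := by
      apply ih; rw [List.length_take]; omega
    have h2 : (stackSort (l.drop (i+1))).Perm (l.drop (i+1)) := by
      apply ih; rw [List.length_drop]; omega
    have e : l.take i ++ m :: l.drop (i+1) = l := take_max_drop l hne
    have p1 : List.Perm (stackSort (l.take i) ++ stackSort (l.drop (i+1)) ++ [m])
        (l.take i ++ l.drop (i+1) ++ [m]) := (h1.append h2).append (List.Perm.refl _)
    have p2 : List.Perm (l.take i ++ (l.drop (i+1) ++ [m])) (l.take i ++ (m :: l.drop (i+1))) :=
      List.Perm.append_left _ (List.perm_append_singleton _ _)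
    have p3 : List.Perm (l.take i ++ (m :: l.drop (i+1))) l := by
      rw [e]
    have p4 : l.take i ++ l.drop (i+1) ++ [m] = l.take i ++ (l.drop (i+1) ++ [m]) :=
      List.append_assoc _ _ _
    exact p1.trans (p4 ▸ (p2.trans p3))

lemma stackSort_perm (l : List ℕ) : (stackSort l).Perm l :=
  stackSort_perm_aux l.length l (le_refl _)

open List in
lemma pair_append {x y : ℕ} {u v : List ℕ} :
    [x,y] <+ u ++ v ↔ [x,y] <+ u ∨ (x ∈ u ∧ y ∈ v) ∨ [x,y] <+ v := by
  constructor
  · intro h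
    rw [List.sublist_append_iff] at h
    obtain ⟨l1, l2, h, h1, h2⟩ := h
    rcases l1 with _ | ⟨a, _ | ⟨b, l⟩⟩
    · simp at h; subst h; exact Or.inr (Or.inr h2)
    · simp at h
      obtain ⟨rfl, rfl⟩ := h
      exact Or.inr (Or.inl ⟨List.singleton_sublist.mp h1, List.singleton_sublist.mp h2⟩)
    · simp at h
      obtain ⟨rfl, rfl, rfl, rfl, rfl⟩ := h
      exact Or.inl h1
  · rintro (h | ⟨h1, h2⟩ | h)
    · exact h.trans (List.sublist_append_left _ _)
    · exact List.Sublist.append (List.singleton_sublist.mpr h1) (List.singleton_sublist.mpr h2)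
    · exact h.trans (List.sublist_append_right _ _)

open List in
lemma triple_append {x y z : ℕ} {u v : List ℕ} :
    [x,y,z] <+ u ++ v ↔ [x,y,z] <+ u ∨ ([x,y] <+ u ∧ z ∈ v) ∨ (x ∈ u ∧ [y,z] <+ v) ∨ [x,y,z] <+ v := by
  constructor
  · intro h
    rw [List.sublist_append_iff] at h
    obtain ⟨l1, l2, h, h1, h2⟩ := h
    rcases l1 with _ | ⟨a, _ | ⟨b, _ | ⟨c, l⟩⟩⟩
    · simp at h; subst h; exact Or.inr (Or.inr (Or.inr h2))
    · simp at h
      obtain ⟨rfl, rfl⟩ := h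
      exact Or.inr (Or.inr (Or.inl ⟨List.singleton_sublist.mp h1, h2⟩))
    · simp at h
      obtain ⟨rfl, rfl, rfl⟩ := h
      exact Or.inr (Or.inl ⟨h1, List.singleton_sublist.mp h2⟩)
    · simp at h
      obtain ⟨rfl, rfl, rfl, rfl, rfl⟩ := h
      exact Or.inl h1
  · rintro (h | ⟨h1, h2⟩ | ⟨h1, h2⟩ | h)
    · exact h.trans (List.sublist_append_left _ _)
    · exact List.Sublist.append h1 (List.singleton_sublist.mpr h2)
    · exact List.Sublist.append (List.singleton_sublist.mpr h1) h2
    · exact h.trans (List.sublist_append_right _ _)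

open List in
lemma quad_append {w x y z : ℕ} {u v : List ℕ} :
    [w,x,y,z] <+ u ++ v ↔ [w,x,y,z] <+ u ∨ ([w,x,y] <+ u ∧ z ∈ v) ∨ ([w,x] <+ u ∧ [y,z] <+ v) ∨
      (w ∈ u ∧ [x,y,z] <+ v) ∨ [w,x,y,z] <+ v := by
  constructor
  · intro h
    rw [List.sublist_append_iff] at h
    obtain ⟨l1, l2, h, h1, h2⟩ := h
    rcases l1 with _ | ⟨a, _ | ⟨b, _ | ⟨c, _ | ⟨d, l⟩⟩⟩⟩
    · simp at h; subst h; exact Or.inr (Or.inr (Or.inr (Or.inr h2)))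
    · simp at h
      obtain ⟨rfl, rfl⟩ := h
      exact Or.inr (Or.inr (Or.inr (Or.inl ⟨List.singleton_sublist.mp h1, h2⟩)))
    · simp at h
      obtain ⟨rfl, rfl, rfl⟩ := h
      exact Or.inr (Or.inr (Or.inl ⟨h1, h2⟩))
    · simp at h
      obtain ⟨rfl, rfl, rfl, rfl⟩ := h
      exact Or.inr (Or.inl ⟨h1, List.singleton_sublist.mp h2⟩)
    · simp at h
      obtain ⟨rfl, rfl, rfl, rfl, rfl, rfl⟩ := h
      exact Or.inl h1
  · rintro (h | ⟨h1, h2⟩ | ⟨h1, h2⟩ | ⟨h1, h2⟩ | h)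
    · exact h.trans (List.sublist_append_left _ _)
    · exact List.Sublist.append h1 (List.singleton_sublist.mpr h2)
    · exact List.Sublist.append h1 h2
    · exact List.Sublist.append (List.singleton_sublist.mpr h1) h2
    · exact h.trans (List.sublist_append_right _ _)

open List in
lemma adj_pair_eq_append {s1 s2 P Q : List ℕ} {x y : ℕ} (h : s1 ++ x :: y :: s2 = P ++ Q) :
    (∃ P2, P = s1 ++ x :: y :: P2 ∧ s2 = P2 ++ Q) ∨
    (P = s1 ++ [x] ∧ Q = y :: s2) ∨
    (∃ Q1, Q = Q1 ++ x :: y :: s2 ∧ s1 = P ++ Q1) := by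
  rw [List.append_eq_append_iff] at h
  rcases h with ⟨a', ha1, ha2⟩ | ⟨c', hc1, hc2⟩
  · rcases a' with _ | ⟨p, _ | ⟨q, a''⟩⟩
    · right; right
      exact ⟨[], by simpa using ha2.symm, by simpa using ha1.symm⟩
    · simp at ha2
      obtain ⟨rfl, rfl⟩ := ha2
      right; left
      exact ⟨ha1, rfl⟩
    · simp only [List.cons_append] at ha2
      injection ha2 with e1 ha3
      injection ha3 with e2 ha4
      subst e1; subst e2
      left
      exact ⟨a'', ha1, ha4⟩
  · right; right
    exact ⟨c', hc2, hc1⟩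

open List in
lemma sorted_or_pair {v : List ℕ} : v.Pairwise (·<·) ∨ ∃ y z, [y,z] <+ v ∧ ¬ y < z := by
  induction v with
  | nil => left; exact List.Pairwise.nil
  | cons a t ih =>
    rcases ih with hs | ⟨y, z, hsub, hyz⟩
    · by_cases h : ∀ b ∈ t, a < b
      · left; exact List.Pairwise.cons h hs
      · push_neg at h
        obtain ⟨b, hb, hab⟩ := h
        right
        exact ⟨a, b, List.cons_sublist_cons.mpr (List.singleton_sublist.mpr hb), not_lt.mpr hab⟩
    · right
      exact ⟨y, z, hsub.trans (List.sublist_cons_self a t), hyz⟩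

open List

def Peak3 (t : List ℕ) : Prop := ∃ x y z, [x,y,z] <+ t ∧ x < y ∧ z < y
def CapL (c : ℕ∞) (t : List ℕ) : Prop := ∀ x y, [x,y] <+ t → y < x → (x:ℕ∞) < c
def VC (c : ℕ∞) (t : List ℕ) : Prop := ¬ Peak3 t ∧ CapL c t
def Pat231 (σ : List ℕ) : Prop := ∃ x y z, [x,y,z] <+ σ ∧ z < x ∧ x < y
def PatC1 (σ : List ℕ) : Prop := ∃ w x y z, [w,x,y,z] <+ σ ∧ w < x ∧ x < y ∧ z < x
def PatC2 (σ : List ℕ) : Prop :=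
  ∃ s1 x y s2 z w, σ = s1 ++ x :: y :: s2 ∧ y < x ∧ [z,w] <+ s2 ∧ x < z ∧ w < x
def CapR (c : ℕ∞) (σ : List ℕ) : Prop := ∀ x y z, [x,y,z] <+ σ → x < y → z < x → (x:ℕ∞) < c
def RC (c : ℕ∞) (σ : List ℕ) : Prop := ¬ PatC1 σ ∧ ¬ PatC2 σ ∧ CapR c σ

lemma decomp_facts (l : List ℕ) (hne : l ≠ []) (hnd : l.Nodup) :
    ∃ A B m, l = A ++ m :: B ∧ stackSort l = stackSort A ++ stackSort B ++ [m] ∧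
      A.Nodup ∧ B.Nodup ∧ (∀ a ∈ A, a < m) ∧ (∀ b ∈ B, b < m) ∧
      (∀ a ∈ A, ∀ b ∈ B, a ≠ b) ∧ A.length + B.length + 1 = l.length := by
  set m := l.foldr max 0 with hm
  set i := l.idxOf m with hi
  have him : i < l.length := List.idxOf_lt_length_iff.mpr (foldr_max_mem l hne)
  refine ⟨l.take i, l.drop (i+1), m, (take_max_drop l hne).symm, stackSort_decomp l hne, ?_⟩
  have heq : l.take i ++ m :: l.drop (i+1) = l := take_max_drop l hne
  have hnd' : (l.take i ++ m :: l.drop (i+1)).Nodup := by rw [heq]; exact hnd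
  rw [List.nodup_append] at hnd'
  obtain ⟨h1, h2, h3⟩ := hnd'
  rw [List.nodup_cons] at h2
  have hle : ∀ x ∈ l, x ≤ m := le_foldr_max l
  have hmem : ∀ x ∈ l.take i ++ m :: l.drop (i+1), x ∈ l := by rw [heq]; intro x hx; exact hx
  refine ⟨h1, h2.2, ?_, ?_, ?_, ?_⟩
  · intro a ha
    have h4 : a ≤ m := hle a (hmem a (List.mem_append_left _ ha))
    have h5 : a ≠ m := by
      intro hh
      exact h3 a ha a (by rw [hh]; exact List.mem_cons_self) rfl
    omega
  · intro b hb
    have h4 : b ≤ m := hle b (hmem b (List.mem_append_right _ (List.mem_cons_of_mem _ hb)))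
    have h5 : b ≠ m := by
      intro hh; subst hh; exact h2.1 hb
    omega
  · intro a ha b hb hab
    subst hab
    exact h3 _ ha _ (List.mem_cons_of_mem _ hb) rfl
  · conv_rhs => rw [← heq]
    simp only [List.length_append, List.length_cons, List.length_take, List.length_drop]
    omega

lemma pat231_decomp {A B : List ℕ} {m : ℕ} (hAm : ∀ a ∈ A, a < m) (hBm : ∀ b ∈ B, b < m) :
    Pat231 (A ++ m :: B) ↔ Pat231 A ∨ Pat231 B ∨ (∃ a ∈ A, ∃ b ∈ B, b < a) := by
  constructor
  · rintro ⟨x, y, z, hsub, hzx, hxy⟩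
    rcases triple_append.mp hsub with h | ⟨h1, h2⟩ | ⟨h1, h2⟩ | h
    · exact Or.inl ⟨x, y, z, h, hzx, hxy⟩
    · -- [x,y] <+ A, z ∈ m :: B
      have hx : x ∈ A := h1.subset (by simp)
      have hzm : z ≠ m := by have := hAm x hx; omega
      have hz : z ∈ B := by
        rcases List.mem_cons.mp h2 with h | h
        · exact absurd h hzm
        · exact h
      exact Or.inr (Or.inr ⟨x, hx, z, hz, hzx⟩)
    · -- x ∈ A, [y,z] <+ m :: B
      have hzm : z ≠ m := by have := hAm x h1; omega
      have hz : z ∈ B := by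
        have hzmem : z ∈ m :: B := h2.subset (by simp)
        rcases List.mem_cons.mp hzmem with h | h
        · exact absurd h hzm
        · exact h
      exact Or.inr (Or.inr ⟨x, h1, z, hz, hzx⟩)
    · -- [x,y,z] <+ m :: B
      have h2 : [x,y,z] <+ [m] ++ B := h
      rcases triple_append.mp h2 with h' | ⟨h1, h2⟩ | ⟨h1, h2⟩ | h'
      · have := h'.length_le; simp at this
      · have := h1.length_le; simp at this
      · have hxm : x = m := by simpa using h1
        have hy : y ∈ B := h2.subset (by simp)
        have := hBm y hy
        omega
      · exact Or.inr (Or.inl ⟨x, y, z, h', hzx, hxy⟩)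
  · rintro (⟨x, y, z, h, hzx, hxy⟩ | ⟨x, y, z, h, hzx, hxy⟩ | ⟨a, ha, b, hb, hba⟩)
    · exact ⟨x, y, z, h.trans (List.sublist_append_left _ _), hzx, hxy⟩
    · refine ⟨x, y, z, ?_, hzx, hxy⟩
      exact (h.trans (List.sublist_cons_self m B)).trans (List.sublist_append_right _ _)
    · refine ⟨a, m, b, ?_, hba, hAm a ha⟩
      exact List.Sublist.append (List.singleton_sublist.mpr ha)
        (List.cons_sublist_cons.mpr (List.singleton_sublist.mpr hb))

lemma sorted_decomp {u v : List ℕ} {m : ℕ} (hu : ∀ a ∈ u, a < m) (hv : ∀ b ∈ v, b < m) :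
    List.Pairwise (·<·) (u ++ v ++ [m]) ↔
      List.Pairwise (·<·) u ∧ List.Pairwise (·<·) v ∧ ∀ a ∈ u, ∀ b ∈ v, a < b := by
  rw [List.append_assoc, List.pairwise_append, List.pairwise_append]
  constructor
  · rintro ⟨h1, ⟨h2, -, -⟩, h3⟩
    exact ⟨h1, h2, fun a ha b hb => h3 a ha b (List.mem_append_left _ hb)⟩
  · rintro ⟨h1, h2, h3⟩
    refine ⟨h1, ⟨h2, by simp, ?_⟩, ?_⟩
    · intro a ha b hb
      have : b = m := by simpa using hb
      subst this
      exact hv a ha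
    · intro a ha b hb
      rcases List.mem_append.mp hb with h | h
      · exact h3 a ha b h
      · have : b = m := by simpa using h
        subst this
        exact hu a ha

lemma mem_stackSort {l : List ℕ} {x : ℕ} : x ∈ stackSort l ↔ x ∈ l :=
  (stackSort_perm l).mem_iff

lemma sorted231 : ∀ N : ℕ, ∀ l : List ℕ, l.length ≤ N → l.Nodup →
    (List.Pairwise (·<·) (stackSort l) ↔ ¬ Pat231 l) := by
  intro N
  induction N with
  | zero =>
    intro l hlen hnd
    have : l = [] := List.length_eq_zero_iff.mp (Nat.le_zero.mp hlen)
    subst this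
    simp only [stackSort_nil]
    refine ⟨fun _ => ?_, fun _ => List.Pairwise.nil⟩
    rintro ⟨x, y, z, h, -, -⟩
    have := h.length_le; simp at this
  | succ N ih =>
    intro l hlen hnd
    rcases eq_or_ne l [] with rfl | hne
    · simp only [stackSort_nil]
      refine ⟨fun _ => ?_, fun _ => List.Pairwise.nil⟩
      rintro ⟨x, y, z, h, -, -⟩
      have := h.length_le; simp at this
    obtain ⟨A, B, m, hl, hs, hA, hB, hAm, hBm, hABne, hlen'⟩ := decomp_facts l hne hnd
    subst hl
    have hlA : A.length ≤ N := by omega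
    have hlB : B.length ≤ N := by omega
    have hAm' : ∀ a ∈ stackSort A, a < m := fun a ha => hAm a (mem_stackSort.mp ha)
    have hBm' : ∀ b ∈ stackSort B, b < m := fun b hb => hBm b (mem_stackSort.mp hb)
    rw [hs, sorted_decomp hAm' hBm', pat231_decomp hAm hBm, not_or, not_or,
        ih A hlA hA, ih B hlB hB]
    constructor
    · rintro ⟨h1, h2, h3⟩
      refine ⟨h1, h2, ?_⟩
      rintro ⟨a, ha, b, hb, hba⟩
      have := h3 a (mem_stackSort.mpr ha) b (mem_stackSort.mpr hb)
      omega
    · rintro ⟨h1, h2, h3⟩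
      refine ⟨h1, h2, ?_⟩
      intro a ha b hb
      have haA : a ∈ A := mem_stackSort.mp ha
      have hbB : b ∈ B := mem_stackSort.mp hb
      have hne' : a ≠ b := hABne a haA b hbB
      have : ¬ b < a := fun hh => h3 ⟨a, haA, b, hbB, hh⟩
      omega

lemma pair_of_pairwise {y z : ℕ} {v : List ℕ} (hs : v.Pairwise (·<·)) (h : [y,z] <+ v) :
    y < z := by
  have := hs.sublist h
  rw [List.pairwise_cons] at this
  exact this.1 z (by simp)

lemma ne_of_nodup_pair {y z : ℕ} {v : List ℕ} (hnd : v.Nodup) (h : [y,z] <+ v) : y ≠ z := by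
  have := hnd.sublist h
  rw [List.nodup_cons] at this
  intro hh
  exact this.1 (by simp [hh])

lemma len3_not_sublist_one {x y z m : ℕ} (h : [x,y,z] <+ [m]) : False := by
  have := h.length_le; simp at this

lemma len2_not_sublist_one {x y m : ℕ} (h : [x,y] <+ [m]) : False := by
  have := h.length_le; simp at this

lemma caseL0 {u : List ℕ} {m : ℕ} (hum : ∀ x ∈ u, x < m) (c : ℕ∞) :
    VC c (u ++ [m]) ↔ VC c u := by
  constructor
  · rintro ⟨hP, hC⟩
    constructor
    · rintro ⟨x, y, z, hsub, hxy, hzy⟩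
      exact hP ⟨x, y, z, hsub.trans (List.sublist_append_left _ _), hxy, hzy⟩
    · intro x y hsub hyx
      exact hC x y (hsub.trans (List.sublist_append_left _ _)) hyx
  · rintro ⟨hP, hC⟩
    constructor
    · rintro ⟨x, y, z, hsub, hxy, hzy⟩
      rcases triple_append.mp hsub with h | ⟨h1, h2⟩ | ⟨h1, h2⟩ | h
      · exact hP ⟨x, y, z, h, hxy, hzy⟩
      · have : z = m := by simpa using h2
        subst this
        have : y ∈ u := h1.subset (by simp)
        exact absurd hzy (by have := hum y this; omega)
      · exact len2_not_sublist_one h2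
      · exact len3_not_sublist_one h
    · intro x y hsub hyx
      rcases pair_append.mp hsub with h | ⟨h1, h2⟩ | h
      · exact hC x y h hyx
      · have : y = m := by simpa using h2
        subst this
        exact absurd hyx (by have := hum x h1; omega)
      · exact absurd h len2_not_sublist_one
  
lemma caseL1 {v : List ℕ} {a m : ℕ} (ha : a < m) (hv : ∀ x ∈ v, x < m)
    (hva : ∀ x ∈ v, x ≠ a) (c : ℕ∞) :
    VC c ([a] ++ (v ++ [m])) ↔
      VC (min (a:ℕ∞) c) v ∧ ((∃ b ∈ v, b < a) → (a:ℕ∞) < c) := by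
  constructor
  · rintro ⟨hP, hC⟩
    refine ⟨⟨?_, ?_⟩, ?_⟩
    · rintro ⟨x, y, z, hsub, hxy, hzy⟩
      have : [x,y,z] <+ [a] ++ (v ++ [m]) :=
        (hsub.trans (List.sublist_append_left _ _)).trans (List.sublist_append_right _ _)
      exact hP ⟨x, y, z, this, hxy, hzy⟩
    · intro x y hsub hyx
      have hlift : [x,y] <+ [a] ++ (v ++ [m]) :=
        (hsub.trans (List.sublist_append_left _ _)).trans (List.sublist_append_right _ _)
      have hxc : (x:ℕ∞) < c := hC x y hlift hyx
      have hxv : x ∈ v := hsub.subset (by simp)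
      have hxa : x < a := by
        by_contra hcon
        have hax : a < x := by have := hva x hxv; omega
        apply hP
        refine ⟨a, x, y, ?_, hax, hyx⟩
        exact List.Sublist.append (List.Sublist.refl [a]) (hsub.trans (List.sublist_append_left _ _))
      exact lt_min (by exact_mod_cast hxa) hxc
    · rintro ⟨b, hb, hba⟩
      refine hC a b ?_ hba
      exact List.Sublist.append (List.Sublist.refl [a])
        ((List.singleton_sublist.mpr hb).trans (List.sublist_append_left _ _))
  · rintro ⟨⟨hPv, hCv⟩, hac⟩
    constructor
    · rintro ⟨x, y, z, hsub, hxy, hzy⟩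
      rcases triple_append.mp hsub with h | ⟨h1, h2⟩ | ⟨h1, h2⟩ | h
      · exact len3_not_sublist_one h
      · exact len2_not_sublist_one h1
      · have hxa : x = a := by simpa using h1
        subst hxa
        rcases pair_append.mp h2 with h' | ⟨h1', h2'⟩ | h'
        · have := hCv y z h' hzy
          have hya : y < x := by
            have := lt_min_iff.mp this
            exact_mod_cast this.1
          omega
        · have : z = m := by simpa using h2'
          subst this
          have := hv y h1'
          omega
        · exact len2_not_sublist_one h'
      · rcases triple_append.mp h with h' | ⟨h1', h2'⟩ | ⟨h1', h2'⟩ | h'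
        · exact hPv ⟨x, y, z, h', hxy, hzy⟩
        · have : z = m := by simpa using h2'
          subst this
          have : y ∈ v := h1'.subset (by simp)
          have := hv y this
          omega
        · exact len2_not_sublist_one h2'
        · exact len3_not_sublist_one h'
    · intro x y hsub hyx
      rcases pair_append.mp hsub with h | ⟨h1, h2⟩ | h
      · exact absurd h (fun hh => len2_not_sublist_one hh)
      · have hxa : x = a := by simpa using h1
        subst hxa
        rcases List.mem_append.mp h2 with h' | h'
        · exact hac ⟨y, h', hyx⟩
        · have : y = m := by simpa using h'
          subst this
          omega
      · rcases pair_append.mp h with h' | ⟨h1', h2'⟩ | h'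
        · exact lt_of_lt_of_le (hCv x y h' hyx) (min_le_right _ _)
        · have : y = m := by simpa using h2'
          subst this
          have := hv x h1'
          omega
        · exact absurd h' (fun hh => len2_not_sublist_one hh)

lemma caseL2 {u v w : List ℕ} {M m : ℕ} (huw : u = w ++ [M]) (hw : w ≠ [])
    (huM : ∀ x ∈ u, x ≤ M) (hund : u.Nodup) (hvnd : v.Nodup)
    (hum : ∀ x ∈ u, x < m) (hvm : ∀ y ∈ v, y < m)
    (hne : ∀ x ∈ u, ∀ y ∈ v, x ≠ y) (hvne : v ≠ []) (c : ℕ∞) :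
    VC c (u ++ (v ++ [m])) ↔
      (∀ x ∈ u, ∀ y ∈ v, x < y) ∧ VC c u ∧ v.Pairwise (·<·) := by
  have hMu : M ∈ u := by rw [huw]; simp
  constructor
  · rintro ⟨hP, hC⟩
    have hMv : ∀ y ∈ v, M < y := by
      intro y hy
      obtain ⟨p, hp⟩ : ∃ p, p ∈ w := by
        cases w with
        | nil => exact absurd rfl hw
        | cons a t => exact ⟨a, by simp⟩
      have hpu : p ∈ u := by rw [huw]; exact List.mem_append_left _ hp
      have hpM : p < M := by
        have h1 : p ≤ M := huM p hpu
        have h2 : p ≠ M := by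
          intro hh
          subst hh
          rw [huw, List.nodup_append] at hund
          exact hund.2.2 _ hp _ (by simp) rfl
        omega
      by_contra hcon
      have hyM : y < M := by
        have := hne M hMu y hy
        omega
      apply hP
      refine ⟨p, M, y, ?_, hpM, hyM⟩
      have h1 : [p, M] <+ u := by
        rw [huw]
        exact List.Sublist.append (List.singleton_sublist.mpr hp) (List.Sublist.refl _)
      exact List.Sublist.append h1
        ((List.singleton_sublist.mpr hy).trans (List.sublist_append_left _ _))
    refine ⟨?_, ⟨?_, ?_⟩, ?_⟩
    · intro x hx y hy
      exact lt_of_le_of_lt (huM x hx) (hMv y hy)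
    · rintro ⟨x, y, z, hsub, hxy, hzy⟩
      exact hP ⟨x, y, z, hsub.trans (List.sublist_append_left _ _), hxy, hzy⟩
    · intro x y hsub hyx
      exact hC x y (hsub.trans (List.sublist_append_left _ _)) hyx
    · rcases sorted_or_pair (v := v) with hs | ⟨y, z, hsub, hyz⟩
      · exact hs
      · exfalso
        have hzy : z < y := by
          have := ne_of_nodup_pair hvnd hsub
          omega
        obtain ⟨p, hp⟩ : ∃ p, p ∈ u := ⟨M, hMu⟩
        apply hP
        refine ⟨p, y, z, ?_, ?_, hzy⟩
        · exact List.Sublist.append (List.singleton_sublist.mpr hp)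
            (hsub.trans (List.sublist_append_left _ _))
        · have hyv : y ∈ v := hsub.subset (by simp)
          exact lt_of_le_of_lt (huM p hp) (hMv y hyv)
  · rintro ⟨hcross, ⟨hPu, hCu⟩, hsv⟩
    constructor
    · rintro ⟨x, y, z, hsub, hxy, hzy⟩
      rcases triple_append.mp hsub with h | ⟨h1, h2⟩ | ⟨h1, h2⟩ | h
      · exact hPu ⟨x, y, z, h, hxy, hzy⟩
      · have hyu : y ∈ u := h1.subset (by simp)
        rcases List.mem_append.mp h2 with h' | h'
        · have := hcross y hyu z h'
          omega
        · have : z = m := by simpa using h'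
          subst this
          have := hum y hyu
          omega
      · rcases pair_append.mp h2 with h' | ⟨h1', h2'⟩ | h'
        · have := pair_of_pairwise hsv h'
          omega
        · have : z = m := by simpa using h2'
          subst this
          have := hvm y h1'
          omega
        · exact len2_not_sublist_one h'
      · rcases triple_append.mp h with h' | ⟨h1', h2'⟩ | ⟨h1', h2'⟩ | h'
        · have := pair_of_pairwise hsv ((List.Sublist.cons₂ x (List.sublist_cons_self y [z])).trans h')
          -- [x,z] <+ [x,y,z] <+ v ... need y,z relation instead
          have hyz := pair_of_pairwise hsv ((List.sublist_cons_self x [y,z]).trans h')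
          omega
        · have : z = m := by simpa using h2'
          subst this
          have hyv : y ∈ v := h1'.subset (by simp)
          have := hvm y hyv
          omega
        · exact len2_not_sublist_one h2'
        · exact len3_not_sublist_one h'
    · intro x y hsub hyx
      rcases pair_append.mp hsub with h | ⟨h1, h2⟩ | h
      · exact hCu x y h hyx
      · rcases List.mem_append.mp h2 with h' | h'
        · have := hcross x h1 y h'
          omega
        · have : y = m := by simpa using h'
          subst this
          have := hum x h1
          omega
      · rcases pair_append.mp h with h' | ⟨h1', h2'⟩ | h'
        · have := pair_of_pairwise hsv h'
          omega
        · have : y = m := by simpa using h2'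
          subst this
          have := hvm x h1'
          omega
        · exact absurd h' (fun hh => len2_not_sublist_one hh)

lemma caseR0a {A : List ℕ} {m : ℕ} (hAm : ∀ a ∈ A, a < m) (c : ℕ∞) :
    RC c (A ++ [m]) ↔ RC c A := by
  constructor
  · rintro ⟨hP1, hP2, hCap⟩
    refine ⟨?_, ?_, ?_⟩
    · rintro ⟨w, x, y, z, hsub, h1, h2, h3⟩
      exact hP1 ⟨w, x, y, z, hsub.trans (List.sublist_append_left _ _), h1, h2, h3⟩
    · rintro ⟨s1, x, y, s2, z, w, heq, h1, hzw, h2, h3⟩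
      refine hP2 ⟨s1, x, y, s2 ++ [m], z, w, ?_, h1, hzw.trans (List.sublist_append_left _ _), h2, h3⟩
      rw [heq]; simp
    · intro x y z hsub h1 h2
      exact hCap x y z (hsub.trans (List.sublist_append_left _ _)) h1 h2
  · rintro ⟨hP1, hP2, hCap⟩
    refine ⟨?_, ?_, ?_⟩
    · rintro ⟨w, x, y, z, hsub, h1, h2, h3⟩
      rcases quad_append.mp hsub with h | ⟨ha, hb⟩ | ⟨ha, hb⟩ | ⟨ha, hb⟩ | h
      · exact hP1 ⟨w, x, y, z, h, h1, h2, h3⟩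
      · have : z = m := by simpa using hb
        subst this
        have hx : x ∈ A := ha.subset (by simp)
        have := hAm x hx
        omega
      · exact len2_not_sublist_one hb
      · exact len3_not_sublist_one hb
      · have := h.length_le; simp at this
    · rintro ⟨s1, x, y, s2, z, w, heq, h1, hzw, h2, h3⟩
      rcases adj_pair_eq_append heq.symm with ⟨P2, hp1, hp2⟩ | ⟨hp1, hp2⟩ | ⟨Q1, hq1, hq2⟩
      · subst hp2
        have hxA : x ∈ A := by rw [hp1]; exact List.mem_append_right _ (by simp)
        rcases pair_append.mp hzw with h | ⟨ha, hb⟩ | h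
        · exact hP2 ⟨s1, x, y, P2, z, w, hp1, h1, h, h2, h3⟩
        · have : w = m := by simpa using hb
          subst this
          have := hAm x hxA
          omega
        · exact len2_not_sublist_one h
      · have he : s2 = [] := by
          injection hp2 with e1 e2
          exact e2.symm
        rw [he] at hzw
        have := hzw.length_le; simp at this
      · have := congrArg List.length hq1
        simp at this
        omega
    · intro x y z hsub h1 h2
      rcases triple_append.mp hsub with h | ⟨ha, hb⟩ | ⟨ha, hb⟩ | h
      · exact hCap x y z h h1 h2
      · have : z = m := by simpa using hb
        subst this
        have hx : x ∈ A := ha.subset (by simp)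
        have := hAm x hx
        omega
      · exact absurd hb (fun hh => len2_not_sublist_one hh)
      · exact absurd h (fun hh => len3_not_sublist_one hh)

lemma caseR0b {B : List ℕ} {m : ℕ} (hBm : ∀ b ∈ B, b < m) (c : ℕ∞) :
    RC c (m :: B) ↔ RC c B := by
  constructor
  · rintro ⟨hP1, hP2, hCap⟩
    refine ⟨?_, ?_, ?_⟩
    · rintro ⟨w, x, y, z, hsub, h1, h2, h3⟩
      exact hP1 ⟨w, x, y, z, hsub.trans (List.sublist_cons_self m B), h1, h2, h3⟩
    · rintro ⟨s1, x, y, s2, z, w, heq, h1, hzw, h2, h3⟩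
      exact hP2 ⟨m :: s1, x, y, s2, z, w, by rw [heq]; rfl, h1, hzw, h2, h3⟩
    · intro x y z hsub h1 h2
      exact hCap x y z (hsub.trans (List.sublist_cons_self m B)) h1 h2
  · rintro ⟨hP1, hP2, hCap⟩
    refine ⟨?_, ?_, ?_⟩
    · rintro ⟨w, x, y, z, hsub, h1, h2, h3⟩
      have hsub' : [w,x,y,z] <+ [m] ++ B := hsub
      rcases quad_append.mp hsub' with h | ⟨ha, hb⟩ | ⟨ha, hb⟩ | ⟨ha, hb⟩ | h
      · have := h.length_le; simp at this
      · have := ha.length_le; simp at this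
      · have := ha.length_le; simp at this
      · have : w = m := by simpa using ha
        subst this
        have hx : x ∈ B := hb.subset (by simp)
        have := hBm x hx
        omega
      · exact hP1 ⟨w, x, y, z, h, h1, h2, h3⟩
    · rintro ⟨s1, x, y, s2, z, w, heq, h1, hzw, h2, h3⟩
      rcases s1 with _ | ⟨p, s1'⟩
      · simp at heq
        obtain ⟨rfl, hB⟩ := heq
        have hzs : z ∈ s2 := hzw.subset (by simp)
        have hzB : z ∈ B := by rw [hB]; exact List.mem_cons_of_mem _ hzs
        have := hBm z hzB
        omega
      · have heq' : m :: B = p :: (s1' ++ x :: y :: s2) := by rw [heq]; rfl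
        injection heq' with e1 e2
        exact hP2 ⟨s1', x, y, s2, z, w, e2, h1, hzw, h2, h3⟩
    · intro x y z hsub h1 h2
      have hsub' : [x,y,z] <+ [m] ++ B := hsub
      rcases triple_append.mp hsub' with h | ⟨ha, hb⟩ | ⟨ha, hb⟩ | h
      · exact absurd h (fun hh => len3_not_sublist_one hh)
      · exact absurd ha (fun hh => len2_not_sublist_one hh)
      · have : x = m := by simpa using ha
        subst this
        have hy : y ∈ B := hb.subset (by simp)
        have := hBm y hy
        omega
      · exact hCap x y z h h1 h2

lemma caseR1 {B : List ℕ} {a m : ℕ} (ha : a < m) (hBm : ∀ b ∈ B, b < m)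
    (hane : ∀ b ∈ B, b ≠ a) (c : ℕ∞) :
    RC c (a :: m :: B) ↔ RC (min (a:ℕ∞) c) B ∧ ((∃ b ∈ B, b < a) → (a:ℕ∞) < c) := by
  constructor
  · rintro ⟨hP1, hP2, hCap⟩
    have hBsub : B <+ a :: m :: B :=
      (List.sublist_cons_self m B).trans (List.sublist_cons_self a _)
    refine ⟨⟨?_, ?_, ?_⟩, ?_⟩
    · rintro ⟨w, x, y, z, hsub, h1, h2, h3⟩
      exact hP1 ⟨w, x, y, z, hsub.trans hBsub, h1, h2, h3⟩
    · rintro ⟨s1, x, y, s2, z, w, heq, h1, hzw, h2, h3⟩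
      exact hP2 ⟨a :: m :: s1, x, y, s2, z, w, by rw [heq]; rfl, h1, hzw, h2, h3⟩
    · intro x y z hsub h1 h2
      have hxc : (x:ℕ∞) < c := hCap x y z (hsub.trans hBsub) h1 h2
      have hxB : x ∈ B := hsub.subset (by simp)
      have hxa : x < a := by
        by_contra hcon
        have hax : a < x := by have := hane x hxB; omega
        apply hP1
        refine ⟨a, x, y, z, ?_, hax, h1, h2⟩
        have : [x,y,z] <+ m :: B := (hsub.trans (List.sublist_cons_self m B))
        exact List.cons_sublist_cons.mpr this
      exact lt_min (by exact_mod_cast hxa) hxc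
    · rintro ⟨b, hb, hba⟩
      refine hCap a m b ?_ ha hba
      exact List.cons_sublist_cons.mpr (List.cons_sublist_cons.mpr (List.singleton_sublist.mpr hb))
  · rintro ⟨⟨hP1B, hP2B, hCB⟩, hac⟩
    refine ⟨?_, ?_, ?_⟩
    · rintro ⟨w, x, y, z, hsub, h1, h2, h3⟩
      have hsub' : [w,x,y,z] <+ [a] ++ (m :: B) := hsub
      rcases quad_append.mp hsub' with h | ⟨hu, hv⟩ | ⟨hu, hv⟩ | ⟨hu, hv⟩ | h
      · have := h.length_le; simp at this
      · have := hu.length_le; simp at this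
      · have := hu.length_le; simp at this
      · have hwa : w = a := by simpa using hu
        rw [hwa] at h1
        have hv' : [x,y,z] <+ [m] ++ B := hv
        rcases triple_append.mp hv' with h' | ⟨hu', hv'2⟩ | ⟨hu', hv'2⟩ | h'
        · exact len3_not_sublist_one h'
        · exact len2_not_sublist_one hu'
        · have hxm : x = m := by simpa using hu'
          subst hxm
          have hy : y ∈ B := hv'2.subset (by simp)
          have := hBm y hy
          omega
        · have := hCB x y z h' h2 h3
          have hxa : x < a := by
            have := lt_min_iff.mp this
            exact_mod_cast this.1
          omega
      · have h' : [w,x,y,z] <+ [m] ++ B := h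
        rcases quad_append.mp h' with h'' | ⟨hu', hv'⟩ | ⟨hu', hv'⟩ | ⟨hu', hv'⟩ | h''
        · have := h''.length_le; simp at this
        · have := hu'.length_le; simp at this
        · have := hu'.length_le; simp at this
        · have hwm : w = m := by simpa using hu'
          subst hwm
          have hx : x ∈ B := hv'.subset (by simp)
          have := hBm x hx
          omega
        · exact hP1B ⟨w, x, y, z, h'', h1, h2, h3⟩
    · rintro ⟨s1, x, y, s2, z, w, heq, h1, hzw, h2, h3⟩
      rcases s1 with _ | ⟨p, s1'⟩
      · simp at heq
        obtain ⟨rfl, rfl, -⟩ := heq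
        omega
      · have heq' : a :: m :: B = p :: (s1' ++ x :: y :: s2) := by rw [heq]; rfl
        injection heq' with e1 e2
        rcases s1' with _ | ⟨q, s1''⟩
        · simp at e2
          obtain ⟨rfl, hB⟩ := e2
          have hz : z ∈ s2 := hzw.subset (by simp)
          have hzB : z ∈ B := by rw [hB]; exact List.mem_cons_of_mem _ hz
          have := hBm z hzB
          omega
        · have e2' : m :: B = q :: (s1'' ++ x :: y :: s2) := by rw [e2]; rfl
          injection e2' with e3 e4
          exact hP2B ⟨s1'', x, y, s2, z, w, e4, h1, hzw, h2, h3⟩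
    · intro x y z hsub h1 h2
      have hsub' : [x,y,z] <+ [a] ++ (m :: B) := hsub
      rcases triple_append.mp hsub' with h | ⟨hu, hv⟩ | ⟨hu, hv⟩ | h
      · exact absurd h (fun hh => len3_not_sublist_one hh)
      · exact absurd hu (fun hh => len2_not_sublist_one hh)
      · have hxa : x = a := by simpa using hu
        subst hxa
        have hz : z ∈ m :: B := hv.subset (by simp)
        have hzB : z ∈ B := by
          rcases List.mem_cons.mp hz with h' | h'
          · omega
          · exact h'
        exact hac ⟨z, hzB, h2⟩
      · have h' : [x,y,z] <+ [m] ++ B := h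
        rcases triple_append.mp h' with h'' | ⟨hu', hv'⟩ | ⟨hu', hv'⟩ | h''
        · exact absurd h'' (fun hh => len3_not_sublist_one hh)
        · exact absurd hu' (fun hh => len2_not_sublist_one hh)
        · have hxm : x = m := by simpa using hu'
          subst hxm
          have hy : y ∈ B := hv'.subset (by simp)
          have := hBm y hy
          omega
        · exact lt_of_lt_of_le (hCB x y z h'' h1 h2) (min_le_right _ _)

lemma caseR2 {A B : List ℕ} {m : ℕ} (hAnd : A.Nodup) (hAm : ∀ a ∈ A, a < m)
    (hBm : ∀ b ∈ B, b < m) (hABne : ∀ a ∈ A, ∀ b ∈ B, a ≠ b)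
    (hA2 : 2 ≤ A.length) (c : ℕ∞) :
    RC c (A ++ m :: B) ↔ (∀ a ∈ A, ∀ b ∈ B, a < b) ∧ RC c A ∧ ¬ Pat231 B := by
  have hAne : A ≠ [] := by intro h; rw [h] at hA2; simp at hA2
  set M := A.foldr max 0 with hM
  have hMA : M ∈ A := foldr_max_mem A hAne
  have hleM : ∀ x ∈ A, x ≤ M := le_foldr_max A
  constructor
  · rintro ⟨hP1, hP2, hCap⟩
    have hMB : ∀ b ∈ B, M < b := by
      intro b hb
      by_contra hcon
      have hbM : b < M := by have := hABne M hMA b hb; omega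
      obtain ⟨h, tA, rfl⟩ : ∃ h tA, A = h :: tA := by
        cases A with
        | nil => exact absurd rfl hAne
        | cons h t => exact ⟨h, t, rfl⟩
      by_cases hhM : h = M
      · -- A = M :: tA, tA ≠ []
        obtain ⟨h2, tA', rfl⟩ : ∃ h2 tA', tA = h2 :: tA' := by
          cases tA with
          | nil => simp at hA2
          | cons h2 t2 => exact ⟨h2, t2, rfl⟩
        have hh2M : h2 < M := by
          have h1 : h2 ≤ M := hleM h2 (by simp)
          have h2' : h2 ≠ M := by
            rw [List.nodup_cons] at hAnd
            intro hh
            rw [hhM, ← hh] at hAnd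
            exact hAnd.1 (by simp)
          omega
        apply hP2
        refine ⟨[], h, h2, tA' ++ m :: B, m, b, rfl, by omega, ?_, by have := hAm h (by simp); omega, by omega⟩
        have : [m, b] <+ m :: B :=
          List.cons_sublist_cons.mpr (List.singleton_sublist.mpr hb)
        exact this.trans (List.sublist_append_right _ _)
      · -- h ≠ M, so M ∈ tA
        have hMtA : M ∈ tA := by
          rcases List.mem_cons.mp hMA with h' | h'
          · exact absurd h'.symm hhM
          · exact h'
        have hhM' : h < M := by
          have h1 : h ≤ M := hleM h (by simp)
          omega
        apply hP1
        refine ⟨h, M, m, b, ?_, hhM', hAm M hMA, hbM⟩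
        have hsub1 : [h, M] <+ h :: tA :=
          List.cons_sublist_cons.mpr (List.singleton_sublist.mpr hMtA)
        have hsub2 : [m, b] <+ m :: B :=
          List.cons_sublist_cons.mpr (List.singleton_sublist.mpr hb)
        exact List.Sublist.append hsub1 hsub2
    refine ⟨?_, ⟨?_, ?_, ?_⟩, ?_⟩
    · intro a haA b hbB
      exact lt_of_le_of_lt (hleM a haA) (hMB b hbB)
    · rintro ⟨w, x, y, z, hsub, h1, h2, h3⟩
      exact hP1 ⟨w, x, y, z, hsub.trans (List.sublist_append_left _ _), h1, h2, h3⟩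
    · rintro ⟨s1, x, y, s2, z, w, heq, h1, hzw, h2, h3⟩
      refine hP2 ⟨s1, x, y, s2 ++ m :: B, z, w, by rw [heq]; simp, h1,
        hzw.trans (List.sublist_append_left _ _), h2, h3⟩
    · intro x y z hsub h1 h2
      exact hCap x y z (hsub.trans (List.sublist_append_left _ _)) h1 h2
    · rintro ⟨x, y, z, hsub, hzx, hxy⟩
      obtain ⟨p, hp⟩ : ∃ p, p ∈ A := by
        cases A with
        | nil => exact absurd rfl hAne
        | cons h t => exact ⟨h, by simp⟩
      apply hP1
      refine ⟨p, x, y, z, ?_, ?_, hxy, hzx⟩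
      · have : [x,y,z] <+ m :: B := hsub.trans (List.sublist_cons_self m B)
        exact List.Sublist.append (List.singleton_sublist.mpr hp) this
      · have hx : x ∈ B := hsub.subset (by simp)
        exact lt_of_le_of_lt (hleM p hp) (hMB x hx)
  · rintro ⟨hcross, ⟨hP1A, hP2A, hCA⟩, h231⟩
    refine ⟨?_, ?_, ?_⟩
    · rintro ⟨w, x, y, z, hsub, h1, h2, h3⟩
      rcases quad_append.mp hsub with h | ⟨hu, hv⟩ | ⟨hu, hv⟩ | ⟨hu, hv⟩ | h
      · exact hP1A ⟨w, x, y, z, h, h1, h2, h3⟩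
      · -- [w,x,y] <+ A, z ∈ m :: B
        have hx : x ∈ A := hu.subset (by simp)
        have hzB : z ∈ B := by
          rcases List.mem_cons.mp hv with h' | h'
          · have := hAm x hx; omega
          · exact h'
        have := hcross x hx z hzB
        omega
      · -- [w,x] <+ A, [y,z] <+ m :: B
        have hx : x ∈ A := hu.subset (by simp)
        have hz : z ∈ m :: B := hv.subset (by simp)
        have hzB : z ∈ B := by
          rcases List.mem_cons.mp hz with h' | h'
          · have := hAm x hx; omega
          · exact h'
        have := hcross x hx z hzB
        omega
      · -- w ∈ A, [x,y,z] <+ m :: B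
        have hv' : [x,y,z] <+ [m] ++ B := hv
        rcases triple_append.mp hv' with h' | ⟨hu', hv'2⟩ | ⟨hu', hv'2⟩ | h'
        · exact len3_not_sublist_one h'
        · exact len2_not_sublist_one hu'
        · have hxm : x = m := by simpa using hu'
          have hy : y ∈ B := hv'2.subset (by simp)
          have := hBm y hy
          omega
        · exact h231 ⟨x, y, z, h', h3, h2⟩
      · have h' : [w,x,y,z] <+ [m] ++ B := h
        rcases quad_append.mp h' with h'' | ⟨hu', hv'⟩ | ⟨hu', hv'⟩ | ⟨hu', hv'⟩ | h''
        · have := h''.length_le; simp at this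
        · have := hu'.length_le; simp at this
        · have := hu'.length_le; simp at this
        · have hwm : w = m := by simpa using hu'
          have hx : x ∈ B := hv'.subset (by simp)
          have := hBm x hx
          rw [hwm] at h1
          omega
        · exact h231 ⟨x, y, z, (List.sublist_cons_self w [x,y,z]).trans h'', h3, h2⟩
    · rintro ⟨s1, x, y, s2, z, w, heq, h1, hzw, h2, h3⟩
      rcases adj_pair_eq_append heq.symm with ⟨P2, hp1, hp2⟩ | ⟨hp1, hp2⟩ | ⟨Q1, hq1, hq2⟩
      · -- pair inside A
        have hxA : x ∈ A := by rw [hp1]; exact List.mem_append_right _ (by simp)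
        subst hp2
        rcases pair_append.mp hzw with h | ⟨hu, hv⟩ | h
        · exact hP2A ⟨s1, x, y, P2, z, w, hp1, h1, h, h2, h3⟩
        · have hwB : w ∈ B := by
            rcases List.mem_cons.mp hv with h' | h'
            · have := hAm x hxA; omega
            · exact h'
          have := hcross x hxA w hwB
          omega
        · have hw : w ∈ m :: B := h.subset (by simp)
          have hwB : w ∈ B := by
            rcases List.mem_cons.mp hw with h' | h'
            · have := hAm x hxA; omega
            · exact h'
          have := hcross x hxA w hwB
          omega
      · -- x is last of A, y = m
        have hxA : x ∈ A := by rw [hp1]; exact List.mem_append_right _ (by simp)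
        have hym : y = m := by injection hp2 with e1 e2; exact e1.symm
        have := hAm x hxA
        omega
      · -- pair inside m :: B
        rcases Q1 with _ | ⟨q, Q1'⟩
        · have hxm : x = m := by injection hq1 with e1 e2; exact e1.symm
          have hz : z ∈ s2 := hzw.subset (by simp)
          have hzB : z ∈ B := by
            have : B = y :: s2 := by injection hq1 with e1 e2
            rw [this]
            exact List.mem_cons_of_mem _ hz
          have := hBm z hzB
          rw [hxm] at h2
          omega
        · have hqm : q = m ∧ B = Q1' ++ x :: y :: s2 := by
            have : m :: B = q :: (Q1' ++ x :: y :: s2) := by rw [hq1]; rfl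
            injection this with e1 e2
            exact ⟨e1.symm, e2⟩
          apply h231
          refine ⟨x, z, w, ?_, h3, h2⟩
          rw [hqm.2]
          refine List.Sublist.trans ?_ (List.sublist_append_right Q1' _)
          exact List.cons_sublist_cons.mpr (hzw.trans ((List.sublist_cons_self y s2)))
    · intro x y z hsub h1 h2
      rcases triple_append.mp hsub with h | ⟨hu, hv⟩ | ⟨hu, hv⟩ | h
      · exact hCA x y z h h1 h2
      · have hx : x ∈ A := hu.subset (by simp)
        have hzB : z ∈ B := by
          rcases List.mem_cons.mp hv with h' | h'
          · have := hAm x hx; omega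
          · exact h'
        have := hcross x hx z hzB
        omega
      · have hz : z ∈ m :: B := hv.subset (by simp)
        have hzB : z ∈ B := by
          rcases List.mem_cons.mp hz with h' | h'
          · have := hAm x hu; omega
          · exact h'
        have := hcross x hu z hzB
        omega
      · have h' : [x,y,z] <+ [m] ++ B := h
        rcases triple_append.mp h' with h'' | ⟨hu', hv'⟩ | ⟨hu', hv'⟩ | h''
        · exact absurd h'' (fun hh => len3_not_sublist_one hh)
        · exact absurd hu' (fun hh => len2_not_sublist_one hh)
        · have hxm : x = m := by simpa using hu'
          have hy : y ∈ B := hv'.subset (by simp)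
          have := hBm y hy
          rw [hxm] at h1
          omega
        · exact absurd ⟨x, y, z, h'', h2, h1⟩ h231

lemma vc_nil (c : ℕ∞) : VC c [] := by
  constructor
  · rintro ⟨x, y, z, h, -, -⟩
    have := h.length_le; simp at this
  · intro x y h _
    have := h.length_le; simp at this

lemma rc_nil (c : ℕ∞) : RC c [] := by
  refine ⟨?_, ?_, ?_⟩
  · rintro ⟨w, x, y, z, h, -, -, -⟩
    have := h.length_le; simp at this
  · rintro ⟨s1, x, y, s2, z, w, heq, -, -, -, -⟩
    have := congrArg List.length heq
    simp at this
  · intro x y z h _ _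
    have := h.length_le; simp at this

lemma stackSort_singleton (a : ℕ) : stackSort [a] = [a] := by
  show ssAux 1 [a] = [a]
  rw [ssAux_cons]
  simp
  rfl

lemma mainEquiv : ∀ N : ℕ, ∀ l : List ℕ, l.length ≤ N → l.Nodup → ∀ c : ℕ∞,
    (VC c (stackSort l) ↔ RC c l) := by
  intro N
  induction N with
  | zero =>
    intro l hlen hnd c
    have : l = [] := List.length_eq_zero_iff.mp (Nat.le_zero.mp hlen)
    subst this
    rw [stackSort_nil]
    exact ⟨fun _ => rc_nil c, fun _ => vc_nil c⟩
  | succ N ih =>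
    intro l hlen hnd c
    rcases eq_or_ne l [] with rfl | hne
    · rw [stackSort_nil]
      exact ⟨fun _ => rc_nil c, fun _ => vc_nil c⟩
    obtain ⟨A, B, m, hl, hs, hA, hB, hAm, hBm, hABne, hlen'⟩ := decomp_facts l hne hnd
    subst hl
    have hlA : A.length ≤ N := by
      have := List.length_append (as := A) (bs := m :: B)
      simp at this
      omega
    have hlB : B.length ≤ N := by
      have := List.length_append (as := A) (bs := m :: B)
      simp at this
      omega
    rw [hs]
    have humS : ∀ x ∈ stackSort A, x < m := fun x hx => hAm x (mem_stackSort.mp hx)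
    have hvmS : ∀ y ∈ stackSort B, y < m := fun y hy => hBm y (mem_stackSort.mp hy)
    rcases eq_or_ne B [] with rfl | hBne
    · -- B = []
      rw [stackSort_nil, List.append_nil]
      rw [caseL0 humS c, caseR0a hAm c]
      exact ih A hlA hA c
    rcases A with _ | ⟨a, A'⟩
    · -- A = []
      rw [stackSort_nil, List.nil_append, List.nil_append]
      rw [caseL0 hvmS c, caseR0b hBm c]
      exact ih B hlB hB c
    rcases A' with _ | ⟨a2, A''⟩
    · -- A = [a]
      have ha : a < m := hAm a (by simp)
      have hva : ∀ x ∈ stackSort B, x ≠ a := by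
        intro x hx
        exact (hABne a (by simp) x (mem_stackSort.mp hx)).symm
      have hane : ∀ b ∈ B, b ≠ a := fun b hb => (hABne a (by simp) b hb).symm
      rw [stackSort_singleton, List.append_assoc, caseL1 ha hvmS hva c]
      have heq2 : ([a] : List ℕ) ++ m :: B = a :: m :: B := by simp
      rw [heq2, caseR1 ha hBm hane c]
      have hmemiff : (∃ b ∈ stackSort B, b < a) ↔ ∃ b ∈ B, b < a := by
        constructor
        · rintro ⟨b, hb, hba⟩
          exact ⟨b, mem_stackSort.mp hb, hba⟩
        · rintro ⟨b, hb, hba⟩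
          exact ⟨b, mem_stackSort.mpr hb, hba⟩
      rw [ih B hlB hB (min (a:ℕ∞) c), hmemiff]
    · -- A = a :: a2 :: A''
      have hAne : (a :: a2 :: A'') ≠ [] := by simp
      have hdec := stackSort_decomp (a :: a2 :: A'') hAne
      have hlu : (stackSort (a :: a2 :: A'')).length = A''.length + 2 := by
        have := (stackSort_perm (a :: a2 :: A'')).length_eq
        simpa using this
      have hw : stackSort ((a :: a2 :: A'').take ((a :: a2 :: A'').idxOf ((a :: a2 :: A'').foldr max 0))) ++
          stackSort ((a :: a2 :: A'').drop ((a :: a2 :: A'').idxOf ((a :: a2 :: A'').foldr max 0) + 1)) ≠ [] := by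
        intro hcon
        rw [hdec, hcon] at hlu
        simp at hlu
      have huM : ∀ x ∈ stackSort (a :: a2 :: A''), x ≤ (a :: a2 :: A'').foldr max 0 :=
        fun x hx => le_foldr_max _ x (mem_stackSort.mp hx)
      have hund : (stackSort (a :: a2 :: A'')).Nodup :=
        ((stackSort_perm _).nodup_iff).mpr hA
      have hvnd : (stackSort B).Nodup := ((stackSort_perm _).nodup_iff).mpr hB
      have hneS : ∀ x ∈ stackSort (a :: a2 :: A''), ∀ y ∈ stackSort B, x ≠ y :=
        fun x hx y hy => hABne x (mem_stackSort.mp hx) y (mem_stackSort.mp hy)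
      have hvneS : stackSort B ≠ [] := by
        intro hcon
        have := (stackSort_perm B).length_eq
        rw [hcon] at this
        simp at this
        exact hBne (List.length_eq_zero_iff.mp this.symm)
      rw [List.append_assoc, caseL2 hdec hw huM hund hvnd humS hvmS hneS hvneS c]
      have hcrossiff : (∀ x ∈ stackSort (a :: a2 :: A''), ∀ y ∈ stackSort B, x < y) ↔
          (∀ x ∈ (a :: a2 :: A''), ∀ y ∈ B, x < y) := by
        constructor
        · intro h x hx y hy
          exact h x (mem_stackSort.mpr hx) y (mem_stackSort.mpr hy)
        · intro h x hx y hy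
          exact h x (mem_stackSort.mp hx) y (mem_stackSort.mp hy)
      rw [hcrossiff, ih (a :: a2 :: A'') hlA hA c, sorted231 N B hlB hB]
      exact (caseR2 hA hAm hBm hABne (by simp) c).symm

lemma triple_sublist_of_get {t : List ℕ} (i j k : Fin t.length) (hij : (i:ℕ) < j) (hjk : (j:ℕ) < k) :
    [t.get i, t.get j, t.get k] <+ t := by
  have hpw : List.Pairwise (fun a b : Fin t.length => (a:ℕ) < (b:ℕ)) [i,j,k] := by
    refine List.Pairwise.cons ?_ (List.Pairwise.cons ?_ (List.pairwise_singleton _ _))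
    · intro b hb
      rcases List.mem_cons.mp hb with rfl | hb
      · exact hij
      · have : b = k := by simpa using hb
        subst this
        omega
    · intro b hb
      have : b = k := by simpa using hb
      subst this
      exact hjk
  exact List.map_getElem_sublist hpw

lemma sublist_to_get3 {t : List ℕ} {x y z : ℕ} (h : [x,y,z] <+ t) :
    ∃ i j k : Fin t.length, (i:ℕ) < j ∧ (j:ℕ) < k ∧ t.get i = x ∧ t.get j = y ∧ t.get k = z := by
  obtain ⟨is, heq, hpw⟩ := List.sublist_eq_map_getElem h
  rcases is with _ | ⟨i, _ | ⟨j, _ | ⟨k, _ | _⟩⟩⟩ <;> simp at heq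
  obtain ⟨hx, hy, hz⟩ := heq
  rw [List.pairwise_cons, List.pairwise_cons] at hpw
  exact ⟨i, j, k, hpw.1 j (by simp), hpw.2.1 k (by simp), hx.symm, hy.symm, hz.symm⟩

def emb3 {n : ℕ} (i j k : Fin n) (p : Fin 3) : Fin n :=
  if p.val = 0 then i else if p.val = 1 then j else k

def emb4 {n : ℕ} (i j k l : Fin n) (p : Fin 4) : Fin n :=
  if p.val = 0 then i else if p.val = 1 then j else if p.val = 2 then k else l

lemma emb3_strictMono {n : ℕ} {i j k : Fin n} (hij : i < j) (hjk : j < k) :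
    StrictMono (emb3 i j k) := by
  intro p q hpq
  obtain ⟨pv, hp⟩ := p
  obtain ⟨qv, hq⟩ := q
  have hpq' : pv < qv := hpq
  have hp' : pv < 3 := hp
  have hq' : qv < 3 := hq
  rcases pv with _|_|_|pv <;> rcases qv with _|_|_|qv <;>
  first
    | exact absurd hp' (by omega)
    | exact absurd hq' (by omega)
    | exact absurd hpq' (by omega)
    | exact (hij : emb3 i j k ⟨0, by omega⟩ < emb3 i j k ⟨1, by omega⟩)
    | exact (hjk : emb3 i j k ⟨1, by omega⟩ < emb3 i j k ⟨2, by omega⟩)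
    | exact (lt_trans hij hjk : emb3 i j k ⟨0, by omega⟩ < emb3 i j k ⟨2, by omega⟩)

lemma emb4_strictMono {n : ℕ} {i j k l : Fin n} (hij : i < j) (hjk : j < k) (hkl : k < l) :
    StrictMono (emb4 i j k l) := by
  intro p q hpq
  obtain ⟨pv, hp⟩ := p
  obtain ⟨qv, hq⟩ := q
  have hpq' : pv < qv := hpq
  have hp' : pv < 4 := hp
  have hq' : qv < 4 := hq
  rcases pv with _|_|_|_|pv <;> rcases qv with _|_|_|_|qv <;>
  first
    | exact absurd hp' (by omega)
    | exact absurd hq' (by omega)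
    | exact absurd hpq' (by omega)
    | exact (hij : emb4 i j k l ⟨0, by omega⟩ < emb4 i j k l ⟨1, by omega⟩)
    | exact (hjk : emb4 i j k l ⟨1, by omega⟩ < emb4 i j k l ⟨2, by omega⟩)
    | exact (hkl : emb4 i j k l ⟨2, by omega⟩ < emb4 i j k l ⟨3, by omega⟩)
    | exact (lt_trans hij hjk : emb4 i j k l ⟨0, by omega⟩ < emb4 i j k l ⟨2, by omega⟩)
    | exact (lt_trans hjk hkl : emb4 i j k l ⟨1, by omega⟩ < emb4 i j k l ⟨3, by omega⟩)
    | exact (lt_trans hij (lt_trans hjk hkl) : emb4 i j k l ⟨0, by omega⟩ < emb4 i j k l ⟨3, by omega⟩)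

lemma quad_sublist_of_get {t : List ℕ} (i j k l : Fin t.length) (hij : (i:ℕ) < j)
    (hjk : (j:ℕ) < k) (hkl : (k:ℕ) < l) :
    [t.get i, t.get j, t.get k, t.get l] <+ t := by
  have hpw : List.Pairwise (fun a b : Fin t.length => (a:ℕ) < (b:ℕ)) [i,j,k,l] := by
    refine List.Pairwise.cons ?_ (List.Pairwise.cons ?_ (List.Pairwise.cons ?_ (List.pairwise_singleton _ _)))
    · intro b hb
      rcases List.mem_cons.mp hb with rfl | hb
      · exact hij
      · rcases List.mem_cons.mp hb with rfl | hb
        · omega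
        · have : b = l := by simpa using hb
          subst this
          omega
    · intro b hb
      rcases List.mem_cons.mp hb with rfl | hb
      · exact hjk
      · have : b = l := by simpa using hb
        subst this
        omega
    · intro b hb
      have : b = l := by simpa using hb
      subst this
      exact hkl
  exact List.map_getElem_sublist hpw

lemma sublist_to_get4 {t : List ℕ} {x y z u : ℕ} (h : [x,y,z,u] <+ t) :
    ∃ i j k l : Fin t.length, (i:ℕ) < j ∧ (j:ℕ) < k ∧ (k:ℕ) < l ∧
      t.get i = x ∧ t.get j = y ∧ t.get k = z ∧ t.get l = u := by
  obtain ⟨is, heq, hpw⟩ := List.sublist_eq_map_getElem h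
  rcases is with _ | ⟨i, _ | ⟨j, _ | ⟨k, _ | ⟨l, _ | _⟩⟩⟩⟩ <;> simp at heq
  obtain ⟨hx, hy, hz, hu⟩ := heq
  rw [List.pairwise_cons, List.pairwise_cons, List.pairwise_cons] at hpw
  exact ⟨i, j, k, l, hpw.1 j (by simp), hpw.2.1 k (by simp), hpw.2.2.1 l (by simp),
    hx.symm, hy.symm, hz.symm, hu.symm⟩

lemma lhs_translate {t : List ℕ} (hnd : t.Nodup) :
    Peak3 t ↔ Contains [1,3,2] t ∨ Contains [2,3,1] t := by
  constructor
  · rintro ⟨x, y, z, hsub, hxy, hzy⟩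
    obtain ⟨i, j, k, hij, hjk, hx, hy, hz⟩ := sublist_to_get3 hsub
    have hik : (i:ℕ) < k := by omega
    have hne' : i ≠ k := by intro hh; rw [hh] at hik; omega
    have hxz : x ≠ z := by
      rw [← hx, ← hz]
      intro hh
      exact hne' (hnd.get_inj_iff.mp hh)
    have hij' : i < j := hij
    have hjk' : j < k := hjk
    subst hx; subst hy; subst hz
    rcases lt_or_gt_of_ne hxz with hlt | hgt
    · left
      refine ⟨emb3 i j k, emb3_strictMono hij' hjk', ?_⟩
      intro p q
      obtain ⟨pv, hp⟩ := p
      obtain ⟨qv, hq⟩ := q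
      have hp' : pv < 3 := hp
      have hq' : qv < 3 := hq
      rcases pv with _|_|_|pv <;> rcases qv with _|_|_|qv <;>
      first
        | exact absurd hp' (by omega)
        | exact absurd hq' (by omega)
        | exact (iff_of_false (by decide) (by omega) : (1:ℕ) < 1 ↔ t.get i < t.get i)
        | exact (iff_of_true (by decide) (by omega) : (1:ℕ) < 3 ↔ t.get i < t.get j)
        | exact (iff_of_true (by decide) (by omega) : (1:ℕ) < 2 ↔ t.get i < t.get k)
        | exact (iff_of_false (by decide) (by omega) : (3:ℕ) < 1 ↔ t.get j < t.get i)
        | exact (iff_of_false (by decide) (by omega) : (3:ℕ) < 3 ↔ t.get j < t.get j)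
        | exact (iff_of_false (by decide) (by omega) : (3:ℕ) < 2 ↔ t.get j < t.get k)
        | exact (iff_of_false (by decide) (by omega) : (2:ℕ) < 1 ↔ t.get k < t.get i)
        | exact (iff_of_true (by decide) (by omega) : (2:ℕ) < 3 ↔ t.get k < t.get j)
        | exact (iff_of_false (by decide) (by omega) : (2:ℕ) < 2 ↔ t.get k < t.get k)
    · right
      refine ⟨emb3 i j k, emb3_strictMono hij' hjk', ?_⟩
      intro p q
      obtain ⟨pv, hp⟩ := p
      obtain ⟨qv, hq⟩ := q
      have hp' : pv < 3 := hp
      have hq' : qv < 3 := hq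
      rcases pv with _|_|_|pv <;> rcases qv with _|_|_|qv <;>
      first
        | exact absurd hp' (by omega)
        | exact absurd hq' (by omega)
        | exact (iff_of_false (by decide) (by omega) : (2:ℕ) < 2 ↔ t.get i < t.get i)
        | exact (iff_of_true (by decide) (by omega) : (2:ℕ) < 3 ↔ t.get i < t.get j)
        | exact (iff_of_false (by decide) (by omega) : (2:ℕ) < 1 ↔ t.get i < t.get k)
        | exact (iff_of_false (by decide) (by omega) : (3:ℕ) < 2 ↔ t.get j < t.get i)
        | exact (iff_of_false (by decide) (by omega) : (3:ℕ) < 3 ↔ t.get j < t.get j)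
        | exact (iff_of_false (by decide) (by omega) : (3:ℕ) < 1 ↔ t.get j < t.get k)
        | exact (iff_of_true (by decide) (by omega) : (1:ℕ) < 2 ↔ t.get k < t.get i)
        | exact (iff_of_true (by decide) (by omega) : (1:ℕ) < 3 ↔ t.get k < t.get j)
        | exact (iff_of_false (by decide) (by omega) : (1:ℕ) < 1 ↔ t.get k < t.get k)
  · rintro (⟨f, hf, hiff⟩ | ⟨f, hf, hiff⟩) <;>
    · refine ⟨t.get (f ⟨0, by norm_num⟩), t.get (f ⟨1, by norm_num⟩), t.get (f ⟨2, by norm_num⟩), ?_, ?_, ?_⟩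
      · exact triple_sublist_of_get _ _ _
          (hf (Fin.mk_lt_mk.mpr (by norm_num))) (hf (Fin.mk_lt_mk.mpr (by norm_num)))
      · exact (hiff ⟨0, by norm_num⟩ ⟨1, by norm_num⟩).mp (by decide)
      · exact (hiff ⟨2, by norm_num⟩ ⟨1, by norm_num⟩).mp (by decide)

lemma rhs1_translate {t : List ℕ} (hnd : t.Nodup) :
    PatC1 t ↔ Contains [2,3,4,1] t ∨ Contains [1,3,4,2] t := by
  constructor
  · rintro ⟨w, x, y, z, hsub, hwx, hxy, hzx⟩
    obtain ⟨i, j, k, l, hij, hjk, hkl, hw, hx, hy, hz⟩ := sublist_to_get4 hsub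
    have hil : (i:ℕ) < l := by omega
    have hne' : i ≠ l := by intro hh; rw [hh] at hil; omega
    have hwz : w ≠ z := by
      rw [← hw, ← hz]
      intro hh
      exact hne' (hnd.get_inj_iff.mp hh)
    have hij' : i < j := hij
    have hjk' : j < k := hjk
    have hkl' : k < l := hkl
    subst hw; subst hx; subst hy; subst hz
    rcases lt_or_gt_of_ne hwz with hlt | hgt
    · right
      refine ⟨emb4 i j k l, emb4_strictMono hij' hjk' hkl', ?_⟩
      intro p q
      obtain ⟨pv, hp⟩ := p
      obtain ⟨qv, hq⟩ := q
      have hp' : pv < 4 := hp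
      have hq' : qv < 4 := hq
      rcases pv with _|_|_|_|pv <;> rcases qv with _|_|_|_|qv <;>
      first
        | exact absurd hp' (by omega)
        | exact absurd hq' (by omega)
        | exact (iff_of_false (by decide) (by omega) : (1:ℕ) < 1 ↔ t.get i < t.get i)
        | exact (iff_of_true (by decide) (by omega) : (1:ℕ) < 3 ↔ t.get i < t.get j)
        | exact (iff_of_true (by decide) (by omega) : (1:ℕ) < 4 ↔ t.get i < t.get k)
        | exact (iff_of_true (by decide) (by omega) : (1:ℕ) < 2 ↔ t.get i < t.get l)
        | exact (iff_of_false (by decide) (by omega) : (3:ℕ) < 1 ↔ t.get j < t.get i)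
        | exact (iff_of_false (by decide) (by omega) : (3:ℕ) < 3 ↔ t.get j < t.get j)
        | exact (iff_of_true (by decide) (by omega) : (3:ℕ) < 4 ↔ t.get j < t.get k)
        | exact (iff_of_false (by decide) (by omega) : (3:ℕ) < 2 ↔ t.get j < t.get l)
        | exact (iff_of_false (by decide) (by omega) : (4:ℕ) < 1 ↔ t.get k < t.get i)
        | exact (iff_of_false (by decide) (by omega) : (4:ℕ) < 3 ↔ t.get k < t.get j)
        | exact (iff_of_false (by decide) (by omega) : (4:ℕ) < 4 ↔ t.get k < t.get k)
        | exact (iff_of_false (by decide) (by omega) : (4:ℕ) < 2 ↔ t.get k < t.get l)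
        | exact (iff_of_false (by decide) (by omega) : (2:ℕ) < 1 ↔ t.get l < t.get i)
        | exact (iff_of_true (by decide) (by omega) : (2:ℕ) < 3 ↔ t.get l < t.get j)
        | exact (iff_of_true (by decide) (by omega) : (2:ℕ) < 4 ↔ t.get l < t.get k)
        | exact (iff_of_false (by decide) (by omega) : (2:ℕ) < 2 ↔ t.get l < t.get l)
    · left
      refine ⟨emb4 i j k l, emb4_strictMono hij' hjk' hkl', ?_⟩
      intro p q
      obtain ⟨pv, hp⟩ := p
      obtain ⟨qv, hq⟩ := q
      have hp' : pv < 4 := hp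
      have hq' : qv < 4 := hq
      rcases pv with _|_|_|_|pv <;> rcases qv with _|_|_|_|qv <;>
      first
        | exact absurd hp' (by omega)
        | exact absurd hq' (by omega)
        | exact (iff_of_false (by decide) (by omega) : (2:ℕ) < 2 ↔ t.get i < t.get i)
        | exact (iff_of_true (by decide) (by omega) : (2:ℕ) < 3 ↔ t.get i < t.get j)
        | exact (iff_of_true (by decide) (by omega) : (2:ℕ) < 4 ↔ t.get i < t.get k)
        | exact (iff_of_false (by decide) (by omega) : (2:ℕ) < 1 ↔ t.get i < t.get l)
        | exact (iff_of_false (by decide) (by omega) : (3:ℕ) < 2 ↔ t.get j < t.get i)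
        | exact (iff_of_false (by decide) (by omega) : (3:ℕ) < 3 ↔ t.get j < t.get j)
        | exact (iff_of_true (by decide) (by omega) : (3:ℕ) < 4 ↔ t.get j < t.get k)
        | exact (iff_of_false (by decide) (by omega) : (3:ℕ) < 1 ↔ t.get j < t.get l)
        | exact (iff_of_false (by decide) (by omega) : (4:ℕ) < 2 ↔ t.get k < t.get i)
        | exact (iff_of_false (by decide) (by omega) : (4:ℕ) < 3 ↔ t.get k < t.get j)
        | exact (iff_of_false (by decide) (by omega) : (4:ℕ) < 4 ↔ t.get k < t.get k)
        | exact (iff_of_false (by decide) (by omega) : (4:ℕ) < 1 ↔ t.get k < t.get l)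
        | exact (iff_of_true (by decide) (by omega) : (1:ℕ) < 2 ↔ t.get l < t.get i)
        | exact (iff_of_true (by decide) (by omega) : (1:ℕ) < 3 ↔ t.get l < t.get j)
        | exact (iff_of_true (by decide) (by omega) : (1:ℕ) < 4 ↔ t.get l < t.get k)
        | exact (iff_of_false (by decide) (by omega) : (1:ℕ) < 1 ↔ t.get l < t.get l)
  · rintro (⟨f, hf, hiff⟩ | ⟨f, hf, hiff⟩) <;>
    · refine ⟨t.get (f ⟨0, by norm_num⟩), t.get (f ⟨1, by norm_num⟩), t.get (f ⟨2, by norm_num⟩),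
        t.get (f ⟨3, by norm_num⟩), ?_, ?_, ?_, ?_⟩
      · exact quad_sublist_of_get _ _ _ _
          (hf (Fin.mk_lt_mk.mpr (by norm_num))) (hf (Fin.mk_lt_mk.mpr (by norm_num)))
          (hf (Fin.mk_lt_mk.mpr (by norm_num)))
      · exact (hiff ⟨0, by norm_num⟩ ⟨1, by norm_num⟩).mp (by decide)
      · exact (hiff ⟨1, by norm_num⟩ ⟨2, by norm_num⟩).mp (by decide)
      · exact (hiff ⟨3, by norm_num⟩ ⟨1, by norm_num⟩).mp (by decide)

lemma pair_sublist_of_get {t : List ℕ} (i j : Fin t.length) (hij : (i:ℕ) < j) :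
    [t.get i, t.get j] <+ t := by
  have hpw : List.Pairwise (fun a b : Fin t.length => (a:ℕ) < (b:ℕ)) [i,j] := by
    refine List.Pairwise.cons ?_ (List.pairwise_singleton _ _)
    intro b hb
    have : b = j := by simpa using hb
    subst this
    exact hij
  exact List.map_getElem_sublist hpw

lemma sublist_to_get2 {t : List ℕ} {x y : ℕ} (h : [x,y] <+ t) :
    ∃ i j : Fin t.length, (i:ℕ) < j ∧ t.get i = x ∧ t.get j = y := by
  obtain ⟨is, heq, hpw⟩ := List.sublist_eq_map_getElem h
  rcases is with _ | ⟨i, _ | ⟨j, _ | _⟩⟩ <;> simp at heq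
  obtain ⟨hx, hy⟩ := heq
  rw [List.pairwise_cons] at hpw
  exact ⟨i, j, hpw.1 j (by simp), hx.symm, hy.symm⟩

lemma split_two (σ : List ℕ) (n1 : ℕ) (h : n1 + 1 < σ.length) :
    σ = σ.take n1 ++ σ[n1] :: σ[n1+1] :: σ.drop (n1+2) := by
  have h1 : σ.drop n1 = σ[n1] :: σ.drop (n1+1) := List.drop_eq_getElem_cons (by omega)
  have h2 : σ.drop (n1+1) = σ[n1+1] :: σ.drop (n1+2) := List.drop_eq_getElem_cons (by omega)
  rw [← h2, ← h1]
  exact (List.take_append_drop n1 σ).symm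

lemma rhs2_translate {σ : List ℕ} (hnd : σ.Nodup) :
    PatC2 σ ↔ Contains3241v σ ∨ Contains3142v σ := by
  constructor
  · rintro ⟨s1, x, y, s2, z, w, heq, hyx, hzw, hxz, hwx⟩
    obtain ⟨p, q, hpq, hz, hw⟩ := sublist_to_get2 hzw
    set n1 := s1.length with hn1
    have hlen : σ.length = n1 + 2 + s2.length := by
      rw [heq]; simp; omega
    have hple : (p:ℕ) < s2.length := p.isLt
    have hqle : (q:ℕ) < s2.length := q.isLt
    have hi1 : n1 < σ.length := by omega
    have hi2 : n1 + 1 < σ.length := by omega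
    have hi3 : n1 + 2 + (p:ℕ) < σ.length := by omega
    have hi4 : n1 + 2 + (q:ℕ) < σ.length := by omega
    have gx : σ[n1]'hi1 = x := by
      rw [List.getElem_of_eq heq, List.getElem_append_right (by omega)]
      have : n1 - s1.length = 0 := by omega
      simp [this]
    have gy : σ[n1+1]'hi2 = y := by
      rw [List.getElem_of_eq heq, List.getElem_append_right (by omega)]
      have : n1 + 1 - s1.length = 1 := by omega
      simp [this]
    have gz : σ[n1+2+(p:ℕ)]'hi3 = z := by
      rw [List.getElem_of_eq heq, List.getElem_append_right (by omega)]
      have : n1 + 2 + (p:ℕ) - s1.length = (p:ℕ) + 2 := by omega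
      simp only [this]
      show s2[(p:ℕ)]'(by omega) = z
      rw [← hz, List.get_eq_getElem]
    have gw : σ[n1+2+(q:ℕ)]'hi4 = w := by
      rw [List.getElem_of_eq heq, List.getElem_append_right (by omega)]
      have : n1 + 2 + (q:ℕ) - s1.length = (q:ℕ) + 2 := by omega
      simp only [this]
      show s2[(q:ℕ)]'(by omega) = w
      rw [← hw, List.get_eq_getElem]
    set I1 : Fin σ.length := ⟨n1, hi1⟩
    set I2 : Fin σ.length := ⟨n1+1, hi2⟩
    set I3 : Fin σ.length := ⟨n1+2+(p:ℕ), hi3⟩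
    set I4 : Fin σ.length := ⟨n1+2+(q:ℕ), hi4⟩
    have gx' : σ.get I1 = x := by rw [List.get_eq_getElem]; exact gx
    have gy' : σ.get I2 = y := by rw [List.get_eq_getElem]; exact gy
    have gz' : σ.get I3 = z := by rw [List.get_eq_getElem]; exact gz
    have gw' : σ.get I4 = w := by rw [List.get_eq_getElem]; exact gw
    have hwy : w ≠ y := by
      rw [← gw', ← gy']
      intro hh
      have := hnd.get_inj_iff.mp hh
      have : (I4 : ℕ) = (I2 : ℕ) := by rw [this]
      simp [I4, I2] at this
      omega
    rcases lt_or_gt_of_ne hwy with hlt | hgt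
    · left
      refine ⟨I1, I2, I3, I4, ?_, ?_, ?_, rfl, ?_, ?_, ?_⟩
      · exact Fin.mk_lt_mk.mpr (by omega)
      · exact Fin.mk_lt_mk.mpr (by omega)
      · exact Fin.mk_lt_mk.mpr (by omega)
      · rw [gw', gy']; exact hlt
      · rw [gy', gx']; exact hyx
      · rw [gx', gz']; exact hxz
    · right
      refine ⟨I1, I2, I3, I4, ?_, ?_, ?_, rfl, ?_, ?_, ?_⟩
      · exact Fin.mk_lt_mk.mpr (by omega)
      · exact Fin.mk_lt_mk.mpr (by omega)
      · exact Fin.mk_lt_mk.mpr (by omega)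
      · rw [gy', gw']; exact hgt
      · rw [gw', gx']; exact hwx
      · rw [gx', gz']; exact hxz
  · have main : ∀ i1 i2 i3 i4 : Fin σ.length, i1 < i2 → i2 < i3 → i3 < i4 →
        (i2 : ℕ) = (i1 : ℕ) + 1 → σ.get i2 < σ.get i1 → σ.get i1 < σ.get i3 →
        σ.get i4 < σ.get i1 → PatC2 σ := by
      intro i1 i2 i3 i4 h12 h23 h34 hadj hv21 hv13 hv41
      have h12' : (i1:ℕ) < i2 := h12
      have h23' : (i2:ℕ) < i3 := h23
      have h34' : (i3:ℕ) < i4 := h34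
      have hi4 : (i4:ℕ) < σ.length := i4.isLt
      have heq := split_two σ (i1:ℕ) (by omega)
      have hdl : (σ.drop ((i1:ℕ)+2)).length = σ.length - ((i1:ℕ)+2) := by simp
      have hp3 : (i3:ℕ) - ((i1:ℕ)+2) < (σ.drop ((i1:ℕ)+2)).length := by omega
      have hp4 : (i4:ℕ) - ((i1:ℕ)+2) < (σ.drop ((i1:ℕ)+2)).length := by omega
      have g3 : (σ.drop ((i1:ℕ)+2)).get ⟨(i3:ℕ) - ((i1:ℕ)+2), hp3⟩ = σ.get i3 := by
        rw [List.get_eq_getElem, List.get_eq_getElem, List.getElem_drop]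
        congr 1
        show (i1:ℕ)+2 + ((i3:ℕ) - ((i1:ℕ)+2)) = (i3:ℕ)
        omega
      have g4 : (σ.drop ((i1:ℕ)+2)).get ⟨(i4:ℕ) - ((i1:ℕ)+2), hp4⟩ = σ.get i4 := by
        rw [List.get_eq_getElem, List.get_eq_getElem, List.getElem_drop]
        congr 1
        show (i1:ℕ)+2 + ((i4:ℕ) - ((i1:ℕ)+2)) = (i4:ℕ)
        omega
      have hsub : [σ.get i3, σ.get i4] <+ σ.drop ((i1:ℕ)+2) := by
        rw [← g3, ← g4]
        refine pair_sublist_of_get _ _ ?_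
        show (i3:ℕ) - ((i1:ℕ)+2) < (i4:ℕ) - ((i1:ℕ)+2)
        omega
      refine ⟨σ.take (i1:ℕ), σ[(i1:ℕ)], σ[(i1:ℕ)+1], σ.drop ((i1:ℕ)+2),
        σ.get i3, σ.get i4, heq, ?_, hsub, ?_, ?_⟩
      · have : σ.get i2 = σ[(i1:ℕ)+1] := by
          rw [List.get_eq_getElem]
          congr 1 <;> omega
        rw [← this]
        have : σ.get i1 = σ[(i1:ℕ)] := List.get_eq_getElem
        rw [← this]
        exact hv21
      · have : σ.get i1 = σ[(i1:ℕ)] := List.get_eq_getElem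
        rw [← this]
        exact hv13
      · have : σ.get i1 = σ[(i1:ℕ)] := List.get_eq_getElem
        rw [← this]
        exact hv41
    rintro (⟨i1, i2, i3, i4, h12, h23, h34, hadj, hv42, hv21, hv13⟩ |
            ⟨i1, i2, i3, i4, h12, h23, h34, hadj, hv24, hv41, hv13⟩)
    · exact main i1 i2 i3 i4 h12 h23 h34 hadj hv21 hv13 (lt_trans hv42 hv21)
    · exact main i1 i2 i3 i4 h12 h23 h34 hadj (lt_trans hv24 hv41) hv13 hv41


/-- `s⁻¹(Av(132,231)) = Av(2341, 1342, 3̲2̲41, 3̲1̲42)`. -/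
theorem stmt6 (n : ℕ) (σ : List ℕ) (hσ : σ.Perm (List.range' 1 n)) :
    (Avoids (stackSort σ) [1, 3, 2] ∧ Avoids (stackSort σ) [2, 3, 1]) ↔
      Avoids σ [2, 3, 4, 1] ∧ Avoids σ [1, 3, 4, 2] ∧
        ¬ Contains3241v σ ∧ ¬ Contains3142v σ := by
  have hnd : σ.Nodup := (hσ.nodup_iff).mpr (List.nodup_range' (s := 1) (n := n))
  have hndt : (stackSort σ).Nodup := ((stackSort_perm σ).nodup_iff).mpr hnd
  have hmain := mainEquiv σ.length σ (le_refl _) hnd ⊤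
  have capLtop : CapL ⊤ (stackSort σ) := by
    intro x y _ _
    exact_mod_cast WithTop.coe_lt_top x
  have capRtop : CapR ⊤ σ := by
    intro x y z _ _ _
    exact_mod_cast WithTop.coe_lt_top x
  constructor
  · rintro ⟨h1, h2⟩
    have hP : ¬ Peak3 (stackSort σ) := by
      intro hp
      rcases (lhs_translate hndt).mp hp with hc | hc
      · exact h1 hc
      · exact h2 hc
    obtain ⟨hP1, hP2, -⟩ := hmain.mp ⟨hP, capLtop⟩
    refine ⟨?_, ?_, ?_, ?_⟩
    · exact fun hc => hP1 ((rhs1_translate hnd).mpr (Or.inl hc))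
    · exact fun hc => hP1 ((rhs1_translate hnd).mpr (Or.inr hc))
    · exact fun hc => hP2 ((rhs2_translate hnd).mpr (Or.inl hc))
    · exact fun hc => hP2 ((rhs2_translate hnd).mpr (Or.inr hc))
  · rintro ⟨h1, h2, h3, h4⟩
    have hP1 : ¬ PatC1 σ := by
      intro hp
      rcases (rhs1_translate hnd).mp hp with hc | hc
      · exact h1 hc
      · exact h2 hc
    have hP2 : ¬ PatC2 σ := by
      intro hp
      rcases (rhs2_translate hnd).mp hp with hc | hc
      · exact h3 hc
      · exact h4 hc
    obtain ⟨hP, -⟩ := hmain.mpr ⟨hP1, hP2, capRtop⟩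
    constructor
    · exact fun hc => hP ((lhs_translate hndt).mpr (Or.inl hc))
    · exact fun hc => hP ((lhs_translate hndt).mpr (Or.inr hc))
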